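/- Let V be a multiplicative unitary of multiplicity 1 on a finite-dimensional Hilbert space H, and let ψ be a state on L(H) such that L(ψ) = (ψ⊗id)(V) is an idempotent. Then V(L(ψ)e ⊗ L(ψ)e) = L(ψ)e ⊗ L(ψ)e, where e is the fixed unit vector. -/

import Mathlib

open scoped InnerProductSpace ComplexOrder

noncomputable section

namespace MU

variable {ι : Type*} [Fintype ι] [DecidableEq ι]

/-- The elementary tensor `f ⊗ g` of two vectors, in the model
`H ⊗ H = EuclideanSpace ℂ (ι × ι)`. -/
def tens (f g : EuclideanSpace ℂ ι) : EuclideanSpace ℂ (ι × ι) :=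
  WithLp.toLp 2 (fun p => f p.1 * g p.2)

/-- `g ↦ f ⊗ g` as a linear map. -/
def tensL (f : EuclideanSpace ℂ ι) :
    EuclideanSpace ℂ ι →ₗ[ℂ] EuclideanSpace ℂ (ι × ι) where
  toFun g := tens f g
  map_add' x y := PiLp.ext fun p => by
    simp only [tens, PiLp.add_apply]; ring
  map_smul' c x := PiLp.ext fun p => by
    simp only [tens, PiLp.smul_apply, smul_eq_mul, RingHom.id_apply]; ring

/-- `f ↦ f ⊗ g` as a linear map. -/
def tensR (g : EuclideanSpace ℂ ι) :
    EuclideanSpace ℂ ι →ₗ[ℂ] EuclideanSpace ℂ (ι × ι) where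
  toFun f := tens f g
  map_add' x y := PiLp.ext fun p => by
    simp only [tens, PiLp.add_apply]; ring
  map_smul' c x := PiLp.ext fun p => by
    simp only [tens, PiLp.smul_apply, smul_eq_mul, RingHom.id_apply]; ring

/-- Action of a matrix on a Euclidean space vector. -/
def appM {κ : Type*} [Fintype κ] (M : Matrix κ κ ℂ) (v : EuclideanSpace ℂ κ) :
    EuclideanSpace ℂ κ :=
  WithLp.toLp 2 (fun i => ∑ j, M i j * v j)

/-- Action of a matrix as a linear map on the Euclidean space. -/
def mact {κ : Type*} [Fintype κ] (M : Matrix κ κ ℂ) :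
    EuclideanSpace ℂ κ →ₗ[ℂ] EuclideanSpace ℂ κ where
  toFun := appM M
  map_add' x y := PiLp.ext fun i => by
    simp only [appM, PiLp.add_apply, mul_add, Finset.sum_add_distrib]
  map_smul' c x := PiLp.ext fun i => by
    simp only [appM, PiLp.smul_apply, smul_eq_mul, RingHom.id_apply, Finset.mul_sum]
    refine Finset.sum_congr rfl fun j _ => ?_
    ring

/-- The leg `V₁₂` on `H ⊗ H ⊗ H`. -/
def leg12 (V : Matrix (ι × ι) (ι × ι) ℂ) : Matrix (ι × ι × ι) (ι × ι × ι) ℂ :=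
  fun p q => V (p.1, p.2.1) (q.1, q.2.1) * (if p.2.2 = q.2.2 then 1 else 0)

/-- The leg `V₁₃` on `H ⊗ H ⊗ H`. -/
def leg13 (V : Matrix (ι × ι) (ι × ι) ℂ) : Matrix (ι × ι × ι) (ι × ι × ι) ℂ :=
  fun p q => V (p.1, p.2.2) (q.1, q.2.2) * (if p.2.1 = q.2.1 then 1 else 0)

/-- The leg `V₂₃` on `H ⊗ H ⊗ H`. -/
def leg23 (V : Matrix (ι × ι) (ι × ι) ℂ) : Matrix (ι × ι × ι) (ι × ι × ι) ℂ :=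
  fun p q => V (p.2.1, p.2.2) (q.2.1, q.2.2) * (if p.1 = q.1 then 1 else 0)

/-- The pentagon equation `V₁₂ V₁₃ V₂₃ = V₂₃ V₁₂`. -/
def Pentagon (V : Matrix (ι × ι) (ι × ι) ℂ) : Prop :=
  leg12 V * leg13 V * leg23 V = leg23 V * leg12 V

/-- `V` is a multiplicative unitary: a unitary satisfying the pentagon equation. -/
def IsMU (V : Matrix (ι × ι) (ι × ι) ℂ) : Prop :=
  V * V.conjTranspose = 1 ∧ V.conjTranspose * V = 1 ∧ Pentagon V

/-- `ξ` is a fixed vector for `V`. -/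
def Fixed (V : Matrix (ι × ι) (ι × ι) ℂ) (ξ : EuclideanSpace ℂ ι) : Prop :=
  ∀ η, mact V (tens ξ η) = tens ξ η

/-- `ξ` is a cofixed vector for `V`. -/
def Cofixed (V : Matrix (ι × ι) (ι × ι) ℂ) (ξ : EuclideanSpace ℂ ι) : Prop :=
  ∀ η, mact V (tens η ξ) = tens η ξ

/-- `V` has multiplicity 1, with fixed unit vector `e` and cofixed unit vector `eHat`. -/
def Mult1 (V : Matrix (ι × ι) (ι × ι) ℂ) (e eHat : EuclideanSpace ℂ ι) : Prop :=
  ‖e‖ = 1 ∧ ‖eHat‖ = 1 ∧ Fixed V e ∧ Cofixed V eHat ∧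
    (∀ ξ, Fixed V ξ → ∃ c : ℂ, ξ = c • e) ∧
    (∀ ξ, Cofixed V ξ → ∃ c : ℂ, ξ = c • eHat)

/-- A pre-subgroup of `V` (with fixed vector `e`): a unit vector `f` with
`⟨f,e⟩ > 0` and `V(f⊗f) = f⊗f`. -/
def IsPreSubgroup (V : Matrix (ι × ι) (ι × ι) ℂ) (e f : EuclideanSpace ℂ ι) : Prop :=
  ‖f‖ = 1 ∧ 0 < ⟪f, e⟫_ℂ ∧ mact V (tens f f) = tens f f

/-- The subspace `H^f = {η : V(f⊗η) = f⊗η}`. -/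
def subUp (V : Matrix (ι × ι) (ι × ι) ℂ) (f : EuclideanSpace ℂ ι) :
    Submodule ℂ (EuclideanSpace ℂ ι) :=
  LinearMap.ker ((mact V).comp (tensL f) - tensL f)

/-- The subspace `H_f = {η : V(η⊗f) = η⊗f}`. -/
def subDown (V : Matrix (ι × ι) (ι × ι) ℂ) (f : EuclideanSpace ℂ ι) :
    Submodule ℂ (EuclideanSpace ℂ ι) :=
  LinearMap.ker ((mact V).comp (tensR f) - tensR f)

/-- The slice `L(ω_{ξ,η}) = (ω_{ξ,η} ⊗ id)(V)`. -/
def Lslice (V : Matrix (ι × ι) (ι × ι) ℂ) (ξ η : EuclideanSpace ℂ ι) : Matrix ι ι ℂ :=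
  fun a b => ∑ x, ∑ y, (starRingEnd ℂ) (ξ x) * η y * V (x, a) (y, b)

/-- The slice `ρ(ω_{ξ,η}) = (id ⊗ ω_{ξ,η})(V)`. -/
def Rslice (V : Matrix (ι × ι) (ι × ι) ℂ) (ξ η : EuclideanSpace ℂ ι) : Matrix ι ι ℂ :=
  fun a b => ∑ x, ∑ y, (starRingEnd ℂ) (ξ x) * η y * V (a, x) (b, y)

/-- The slice `L(ω) = (ω ⊗ id)(V)` of a general linear functional `ω` on `L(H)`. -/
def LslF (V : Matrix (ι × ι) (ι × ι) ℂ) (ω : Matrix ι ι ℂ →ₗ[ℂ] ℂ) : Matrix ι ι ℂ :=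
  fun a b => ω (fun x y => V (x, a) (y, b))

/-- A state on `L(H)`: a unital positive linear functional. -/
def IsState (ω : Matrix ι ι ℂ →ₗ[ℂ] ℂ) : Prop :=
  ω 1 = 1 ∧ ∀ M : Matrix ι ι ℂ, M.PosSemidef → ∃ r : ℝ, 0 ≤ r ∧ ω M = r



section AuxiliaryLemmas

open Matrix

set_option linter.unusedSectionVars false
set_option maxHeartbeats 1600000

/-- Cauchy–Schwarz for finite complex sums. -/
lemma cs_normSq {κ : Type*} [Fintype κ] (x y : κ → ℂ) :
    Complex.normSq (∑ k, (starRingEnd ℂ) (x k) * y k) ≤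
      (∑ k, Complex.normSq (x k)) * (∑ k, Complex.normSq (y k)) := by
  have hx : ‖(WithLp.equiv 2 (κ → ℂ)).symm x‖ ^ 2 = ∑ k, Complex.normSq (x k) := by
    rw [EuclideanSpace.norm_eq, Real.sq_sqrt (by positivity)]
    simp [Complex.sq_norm]
  have hy : ‖(WithLp.equiv 2 (κ → ℂ)).symm y‖ ^ 2 = ∑ k, Complex.normSq (y k) := by
    rw [EuclideanSpace.norm_eq, Real.sq_sqrt (by positivity)]
    simp [Complex.sq_norm]
  have hi : (inner ℂ ((WithLp.equiv 2 (κ → ℂ)).symm x) ((WithLp.equiv 2 (κ → ℂ)).symm y) : ℂ)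
      = ∑ k, (starRingEnd ℂ) (x k) * y k := by
    simp [PiLp.inner_apply, RCLike.inner_apply, mul_comm]
  have h := norm_inner_le_norm (𝕜 := ℂ)
    ((WithLp.equiv 2 (κ → ℂ)).symm x) ((WithLp.equiv 2 (κ → ℂ)).symm y)
  have h2 := mul_self_le_mul_self (norm_nonneg _) h
  rw [hi] at h2
  calc Complex.normSq (∑ k, (starRingEnd ℂ) (x k) * y k)
      = ‖∑ k, (starRingEnd ℂ) (x k) * y k‖ * ‖∑ k, (starRingEnd ℂ) (x k) * y k‖ := by
        rw [Complex.normSq_eq_norm_sq, sq]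
    _ ≤ _ := h2.trans_eq (by rw [← hx, ← hy]; ring)

lemma psi_fun_sum {κ : Type*} [Fintype κ] (ψ : Matrix ι ι ℂ →ₗ[ℂ] ℂ)
    (g : κ → ℂ) (M : κ → Matrix ι ι ℂ) :
    ψ (fun x y => ∑ c, g c * M c x y) = ∑ c, g c * ψ (M c) := by
  have h : (fun x y => ∑ c, g c * M c x y) = ∑ c, g c • M c := by
    funext x y
    simp [Matrix.sum_apply]
  rw [h, map_sum]
  simp [smul_eq_mul]

lemma herm_quad_conj {M : Matrix ι ι ℂ} (hM : M.IsHermitian) (x : ι → ℂ) :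
    (starRingEnd ℂ) (dotProduct (star x) (M *ᵥ x)) = dotProduct (star x) (M *ᵥ x) := by
  simp only [dotProduct, Matrix.mulVec, dotProduct, map_sum, Finset.mul_sum]
  rw [Finset.sum_comm]
  refine Finset.sum_congr rfl fun j _ => Finset.sum_congr rfl fun k _ => ?_
  have h1 : (starRingEnd ℂ) (M k j) = M j k := by
    have := congrFun (congrFun hM j) k
    simpa [Matrix.conjTranspose_apply] using this
  simp only [_root_.map_mul, h1, Pi.star_apply, RCLike.star_def, Complex.conj_conj]
  ring

lemma state_real_on_herm {ψ : Matrix ι ι ℂ →ₗ[ℂ] ℂ} (hψ : IsState ψ)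
    {M : Matrix ι ι ℂ} (hM : M.IsHermitian) : ∃ r : ℝ, ψ M = r := by
  classical
  set c : ℝ := ∑ j, ∑ k, ‖M j k‖ with hc
  have hpsd : (M + (c:ℂ) • 1).PosSemidef := by
    refine Matrix.PosSemidef.of_dotProduct_mulVec_nonneg ?_ ?_
    · unfold Matrix.IsHermitian
      rw [Matrix.conjTranspose_add, hM, Matrix.conjTranspose_smul]
      simp [Complex.star_def, Complex.conj_ofReal]
    · intro x
      have hs0 : (0:ℝ) ≤ ∑ j, Complex.normSq (x j) :=
        Finset.sum_nonneg fun _ _ => Complex.normSq_nonneg _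
      set s : ℝ := ∑ j, Complex.normSq (x j) with hs
      have hz : dotProduct (star x) ((M + (c:ℂ) • 1) *ᵥ x)
          = dotProduct (star x) (M *ᵥ x) + ((c * s : ℝ) : ℂ) := by
        rw [Matrix.add_mulVec, dotProduct_add]
        congr 1
        simp only [Matrix.smul_mulVec, Matrix.one_mulVec, dotProduct_smul,
          smul_eq_mul]
        have hd : dotProduct (star x) x = ∑ j, (Complex.normSq (x j) : ℂ) := by
          simp only [dotProduct, Pi.star_apply, RCLike.star_def]
          exact Finset.sum_congr rfl fun j _ => (Complex.normSq_eq_conj_mul_self).symm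
        rw [hd, hs]
        push_cast
        ring
      have hjk : ∀ j k : ι, ‖x j‖ * ‖x k‖ ≤ s := by
        intro j k
        have h2 : ‖x j‖^2 ≤ s := by
          rw [Complex.sq_norm]
          exact Finset.single_le_sum (f := fun i => Complex.normSq (x i))
            (fun _ _ => Complex.normSq_nonneg _) (Finset.mem_univ j)
        have h3 : ‖x k‖^2 ≤ s := by
          rw [Complex.sq_norm]
          exact Finset.single_le_sum (f := fun i => Complex.normSq (x i))
            (fun _ _ => Complex.normSq_nonneg _) (Finset.mem_univ k)
        nlinarith [sq_nonneg (‖x j‖ - ‖x k‖),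
          norm_nonneg (x j), norm_nonneg (x k)]
      have habs : ‖dotProduct (star x) (M *ᵥ x)‖ ≤ c * s := by
        calc ‖dotProduct (star x) (M *ᵥ x)‖
            ≤ ∑ j, ‖star x j * (M *ᵥ x) j‖ := norm_sum_le _ _
          _ = ∑ j, ‖x j‖ * ‖(M *ᵥ x) j‖ := by
              refine Finset.sum_congr rfl fun j _ => ?_
              rw [norm_mul]
              simp [Pi.star_apply, RCLike.star_def]
          _ ≤ ∑ j, ‖x j‖ * ∑ k, ‖M j k‖ * ‖x k‖ := by
              refine Finset.sum_le_sum fun j _ => ?_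
              refine mul_le_mul_of_nonneg_left ?_ (norm_nonneg _)
              refine (norm_sum_le _ _).trans_eq ?_
              exact Finset.sum_congr rfl fun k _ => norm_mul _ _
          _ = ∑ j, ∑ k, ‖M j k‖ * (‖x j‖ * ‖x k‖) := by
              refine Finset.sum_congr rfl fun j _ => ?_
              rw [Finset.mul_sum]
              exact Finset.sum_congr rfl fun k _ => by ring
          _ ≤ ∑ j, ∑ k, ‖M j k‖ * s := by
              refine Finset.sum_le_sum fun j _ => Finset.sum_le_sum fun k _ =>
                mul_le_mul_of_nonneg_left (hjk j k) (norm_nonneg _)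
          _ = c * s := by
              rw [hc, Finset.sum_mul]
              exact Finset.sum_congr rfl fun j _ => (Finset.sum_mul _ _ _).symm
      have him : (dotProduct (star x) (M *ᵥ x)).im = 0 :=
        Complex.conj_eq_iff_im.mp (herm_quad_conj hM x)
      rw [hz, Complex.le_def]
      constructor
      · simp only [Complex.add_re, Complex.zero_re, Complex.ofReal_re]
        have := Complex.abs_re_le_norm (dotProduct (star x) (M *ᵥ x))
        have := abs_le.mp (this.trans habs) |>.1
        linarith
      · simp [him]
  obtain ⟨r, _, hr⟩ := hψ.2 _ hpsd
  refine ⟨r - c, ?_⟩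
  have : ψ (M + (c:ℂ) • 1) = ψ M + (c:ℂ) * ψ 1 := by
    rw [map_add, LinearMap.map_smul, smul_eq_mul]
  rw [hr] at this
  rw [hψ.1, mul_one] at this
  push_cast
  exact eq_sub_of_add_eq this.symm

lemma state_conj {ψ : Matrix ι ι ℂ →ₗ[ℂ] ℂ} (hψ : IsState ψ) (M : Matrix ι ι ℂ) :
    ψ Mᴴ = (starRingEnd ℂ) (ψ M) := by
  obtain ⟨r1, h1⟩ := state_real_on_herm hψ (M := M + Mᴴ) (by
    unfold Matrix.IsHermitian
    rw [Matrix.conjTranspose_add, Matrix.conjTranspose_conjTranspose, add_comm])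
  obtain ⟨r2, h2⟩ := state_real_on_herm hψ (M := Complex.I • (M - Mᴴ)) (by
    unfold Matrix.IsHermitian
    rw [Matrix.conjTranspose_smul, Matrix.conjTranspose_sub,
      Matrix.conjTranspose_conjTranspose]
    simp only [Complex.star_def, Complex.conj_I]
    module)
  rw [map_add] at h1
  rw [LinearMap.map_smul, map_sub, smul_eq_mul] at h2
  set a := ψ M
  set b := ψ Mᴴ
  have e1r := congrArg Complex.re h1
  have e1i := congrArg Complex.im h1
  have e2r := congrArg Complex.re h2
  have e2i := congrArg Complex.im h2
  simp only [Complex.add_re, Complex.add_im, Complex.ofReal_re, Complex.ofReal_im,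
    Complex.mul_re, Complex.mul_im, Complex.I_re, Complex.I_im, Complex.sub_re,
    Complex.sub_im] at e1r e1i e2r e2i
  apply Complex.ext
  · simp only [Complex.conj_re]; linarith
  · simp only [Complex.conj_im]; linarith

lemma state_rep {ψ : Matrix ι ι ℂ →ₗ[ℂ] ℂ} (hψ : IsState ψ) :
    ∃ B : Matrix ι ι ℂ, ∀ M : Matrix ι ι ℂ,
      ψ M = ∑ i, ∑ j, ∑ k, B i j * M j k * (starRingEnd ℂ) (B i k) := by
  classical
  set D : Matrix ι ι ℂ := Matrix.of fun k j => ψ (Matrix.single j k 1) with hD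
  have hquad : ∀ x : ι → ℂ, dotProduct (star x) (D *ᵥ x) = ψ (Matrix.vecMulVec x (star x)) := by
    intro x
    have : dotProduct (star x) (D *ᵥ x)
        = ∑ p : ι × ι, ((starRingEnd ℂ) (x p.1) * x p.2) * ψ (Matrix.single p.2 p.1 1) := by
      rw [Fintype.sum_prod_type]
      simp only [dotProduct, Matrix.mulVec, dotProduct, Pi.star_apply, RCLike.star_def,
        Finset.mul_sum, hD, Matrix.of_apply]
      refine Finset.sum_congr rfl fun k _ => Finset.sum_congr rfl fun j _ => by ring
    rw [this, ← psi_fun_sum ψ (fun p : ι × ι => (starRingEnd ℂ) (x p.1) * x p.2)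
      (fun p : ι × ι => Matrix.single p.2 p.1 1)]
    congr 1
    funext p q
    rw [Fintype.sum_prod_type]
    simp only [Matrix.single, Matrix.of_apply, Matrix.vecMulVec_apply, Pi.star_apply,
      RCLike.star_def, mul_ite, mul_one, mul_zero, ite_and]
    rw [Finset.sum_comm]
    simp [Finset.sum_ite_eq, Finset.sum_ite_eq']
    ring
  have hherm : D.IsHermitian := by
    unfold Matrix.IsHermitian
    funext k j
    rw [Matrix.conjTranspose_apply, hD, Matrix.of_apply, Matrix.of_apply, RCLike.star_def,
      ← state_conj hψ]
    congr 1
    funext a b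
    simp only [Matrix.conjTranspose_apply, Matrix.single, Matrix.of_apply]
    rw [show ∀ c1 c2 : Prop, ∀ [Decidable c1] [Decidable c2],
      star (if c1 ∧ c2 then (1:ℂ) else 0) = if c1 ∧ c2 then (1:ℂ) else 0 from by
        intros c1 c2 _ _; split <;> simp]
    by_cases h1 : j = a <;> by_cases h2 : k = b <;> simp [h1, h2, and_comm]
  have hpsd : D.PosSemidef := by
    refine .of_dotProduct_mulVec_nonneg hherm fun x => ?_
    rw [hquad]
    have hv : (Matrix.vecMulVec x (star x)).PosSemidef := by
      refine .of_dotProduct_mulVec_nonneg ?_ fun y => ?_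
      · unfold Matrix.IsHermitian
        funext a b
        simp [Matrix.conjTranspose_apply, Matrix.vecMulVec_apply, mul_comm]
      · have : Matrix.vecMulVec x (star x) *ᵥ y = (∑ q, (starRingEnd ℂ) (x q) * y q) • x := by
          funext pp
          simp [Matrix.mulVec, Matrix.vecMulVec_apply, dotProduct, Finset.mul_sum,
            Finset.sum_mul, smul_eq_mul]
          exact Finset.sum_congr rfl fun q _ => by ring
        rw [this, dotProduct_smul]
        have hd : dotProduct (star y) x
            = (starRingEnd ℂ) (∑ q, (starRingEnd ℂ) (x q) * y q) := by
          rw [map_sum]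
          simp only [dotProduct, Pi.star_apply, RCLike.star_def, _root_.map_mul,
            Complex.conj_conj]
          exact Finset.sum_congr rfl fun q _ => by ring
        rw [smul_eq_mul, hd]
        rw [Complex.mul_conj]
        exact Complex.zero_le_real.mpr (Complex.normSq_nonneg _)
    obtain ⟨r, hr0, hr⟩ := hψ.2 _ hv
    rw [hr]
    exact Complex.zero_le_real.mpr hr0
  open scoped MatrixOrder in
  obtain ⟨B, hB⟩ := CStarAlgebra.nonneg_iff_eq_star_mul_self.mp hpsd.nonneg
  rw [Matrix.star_eq_conjTranspose] at hB
  refine ⟨B, fun M => ?_⟩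
  have hM : M = ∑ p : ι × ι, M p.1 p.2 • Matrix.single p.1 p.2 (1:ℂ) := by
    rw [Fintype.sum_prod_type]
    conv_lhs => rw [Matrix.matrix_eq_sum_single M]
    refine Finset.sum_congr rfl fun a _ => Finset.sum_congr rfl fun b _ => ?_
    rw [Matrix.smul_single, smul_eq_mul, mul_one]
  calc ψ M = ∑ p : ι × ι, M p.1 p.2 * ψ (Matrix.single p.1 p.2 1) := by
        conv_lhs => rw [hM]
        rw [map_sum]
        exact Finset.sum_congr rfl fun p _ => by rw [LinearMap.map_smul, smul_eq_mul]
    _ = ∑ p : ι × ι, M p.1 p.2 * D p.2 p.1 := rfl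
    _ = ∑ a, ∑ b, ∑ i, B i a * M a b * (starRingEnd ℂ) (B i b) := by
        rw [Fintype.sum_prod_type]
        refine Finset.sum_congr rfl fun a _ => Finset.sum_congr rfl fun b _ => ?_
        rw [hB, Matrix.mul_apply, Finset.mul_sum]
        refine Finset.sum_congr rfl fun i _ => ?_
        rw [Matrix.conjTranspose_apply, RCLike.star_def]
        ring
    _ = ∑ i, ∑ j, ∑ k, B i j * M j k * (starRingEnd ℂ) (B i k) := by
        rw [show (∑ a, ∑ b, ∑ i, B i a * M a b * (starRingEnd ℂ) (B i b))
            = ∑ a, ∑ i, ∑ b, B i a * M a b * (starRingEnd ℂ) (B i b) from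
          Finset.sum_congr rfl fun a _ => Finset.sum_comm]
        exact Finset.sum_comm

lemma sum_rot3 {α β γ : Type*} [Fintype α] [Fintype β] [Fintype γ] (g : α → β → γ → ℂ) :
    ∑ a, ∑ b, ∑ c, g a b c = ∑ b, ∑ c, ∑ a, g a b c :=
  Finset.sum_comm.trans (Finset.sum_congr rfl fun _ _ => Finset.sum_comm)

lemma pentagon_coord {V : Matrix (ι × ι) (ι × ι) ℂ} (hp : Pentagon V) (x a b y k d : ι) :
    ∑ c, V (a,b) (c,d) * V (x,c) (y,k)
      = ∑ z, ∑ c', ∑ d', V (x,a) (z,c') * V (z,b) (y,d') * V (c',d') (k,d) := by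
  have e1 : (leg23 V * leg12 V) ((x,a,b) : ι × ι × ι) ((y,k,d) : ι × ι × ι)
      = ∑ c, V (a,b) (c,d) * V (x,c) (y,k) := by
    rw [Matrix.mul_apply]
    simp only [Fintype.sum_prod_type, leg12, leg23]
    rw [Fintype.sum_eq_single x]
    · simp only [if_pos rfl, mul_one]
      refine Finset.sum_congr rfl fun c _ => ?_
      rw [Fintype.sum_eq_single d]
      · simp
      · intro r3 hne
        simp [hne]
    · intro r1 hne
      have : ¬ (x = r1) := fun h => hne h.symm
      simp [this]
  have e2 : (leg12 V * leg13 V * leg23 V) ((x,a,b) : ι × ι × ι) ((y,k,d) : ι × ι × ι)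
      = ∑ z, ∑ c', ∑ d', V (x,a) (z,c') * V (z,b) (y,d') * V (c',d') (k,d) := by
    rw [Matrix.mul_apply]
    simp only [Fintype.sum_prod_type, leg23]
    rw [Fintype.sum_eq_single y]
    · simp only [if_pos rfl, mul_one, if_true]
      have inner : ∀ r2 r3 : ι, (leg12 V * leg13 V) ((x,a,b) : ι × ι × ι) ((y,r2,r3) : ι × ι × ι)
          = ∑ s1, V (x,a) (s1,r2) * V (s1,b) (y,r3) := by
        intro r2 r3
        rw [Matrix.mul_apply]
        simp only [Fintype.sum_prod_type, leg12, leg13]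
        refine Finset.sum_congr rfl fun s1 _ => ?_
        rw [Fintype.sum_eq_single r2]
        · rw [Fintype.sum_eq_single b]
          · simp
          · intro s3 hne3
            have : ¬ (b = s3) := fun h => hne3 h.symm
            simp [this]
        · intro s2 hne
          rw [Fintype.sum_eq_single b]
          · simp [hne]
          · intro s3 hne3
            have : ¬ (b = s3) := fun h => hne3 h.symm
            simp [this]
      simp only [inner, if_true, mul_one]
      conv_rhs => rw [sum_rot3 (fun z c' d' => V (x,a) (z,c') * V (z,b) (y,d') * V (c',d') (k,d))]
      refine Finset.sum_congr rfl fun r2 _ => Finset.sum_congr rfl fun r3 _ => ?_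
      rw [Finset.sum_mul]
    · intro r1 hne
      simp [hne]
  have hp' : leg12 V * leg13 V * leg23 V = leg23 V * leg12 V := hp
  rw [← e1, ← hp', e2]

lemma unit_coord {V : Matrix (ι × ι) (ι × ι) ℂ} (hu : V.conjTranspose * V = 1)
    (u w : EuclideanSpace ℂ (ι × ι)) :
    ∑ p, (starRingEnd ℂ) (appM V u p) * appM V w p = ∑ p, (starRingEnd ℂ) (u p) * w p := by
  have key : ∀ q q' : ι × ι, ∑ p, (starRingEnd ℂ) (V p q) * V p q'
      = if q = q' then (1:ℂ) else 0 := by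
    intro q q'
    have h := congrFun (congrFun hu q) q'
    simp only [Matrix.mul_apply, Matrix.conjTranspose_apply, RCLike.star_def,
      Matrix.one_apply] at h
    exact h
  calc ∑ p, (starRingEnd ℂ) (appM V u p) * appM V w p
      = ∑ p, ∑ q, ∑ q', ((starRingEnd ℂ) (u q) * w q') * ((starRingEnd ℂ) (V p q) * V p q') := by
        refine Finset.sum_congr rfl fun p _ => ?_
        show (starRingEnd ℂ) (∑ q, V p q * u q) * (∑ q', V p q' * w q') = _
        rw [map_sum, Finset.sum_mul]
        refine Finset.sum_congr rfl fun q _ => ?_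
        rw [Finset.mul_sum]
        refine Finset.sum_congr rfl fun q' _ => ?_
        rw [_root_.map_mul]
        ring
    _ = ∑ q, ∑ q', ∑ p, ((starRingEnd ℂ) (u q) * w q') * ((starRingEnd ℂ) (V p q) * V p q') :=
        sum_rot3 _
    _ = ∑ q, ∑ q', ((starRingEnd ℂ) (u q) * w q') * ∑ p, (starRingEnd ℂ) (V p q) * V p q' := by
        refine Finset.sum_congr rfl fun q _ => Finset.sum_congr rfl fun q' _ =>
          (Finset.mul_sum _ _ _).symm
    _ = ∑ p, (starRingEnd ℂ) (u p) * w p := by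
        simp only [key, mul_ite, mul_one, mul_zero]
        refine Finset.sum_congr rfl fun q _ => ?_
        simp [Finset.sum_ite_eq]

lemma appM_mul (M N : Matrix ι ι ℂ) (v : EuclideanSpace ℂ ι) :
    appM (M * N) v = appM M (appM N v) := by
  ext i
  show ∑ j, (M * N) i j * v j = ∑ k, M i k * (∑ j, N k j * v j)
  simp only [Matrix.mul_apply, Finset.sum_mul, Finset.mul_sum]
  rw [Finset.sum_comm]
  refine Finset.sum_congr rfl fun k _ => Finset.sum_congr rfl fun j _ => by ring

lemma fixed_coord {V : Matrix (ι × ι) (ι × ι) ℂ} {e : EuclideanSpace ℂ ι}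
    (hf : Fixed V e) (η : EuclideanSpace ℂ ι) (c' d' : ι) :
    ∑ k, ∑ d, V (c',d') (k,d) * (e k * η d) = e c' * η d' := by
  have h : appM V (tens e η) = tens e η := hf η
  have h2 := congrFun (congrArg WithLp.ofLp h) (c', d')
  have h3 : appM V (tens e η) (c',d') = ∑ k, ∑ d, V (c',d') (k,d) * (e k * η d) := by
    show ∑ q : ι × ι, V (c',d') q * (e q.1 * η q.2) = _
    rw [Fintype.sum_prod_type]
  rw [← h3, h2]
  rfl

lemma swap5 {α β : Type*} [Fintype α] [Fintype β]
    (G : (α × α) → (β × β × β) → ℂ) :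
    ∑ d, ∑ k, ∑ z, ∑ c', ∑ d', G (d,k) (z,c',d')
      = ∑ z, ∑ c', ∑ d', ∑ d, ∑ k, G (d,k) (z,c',d') := by
  have h1 : ∀ p : α × α, ∑ z, ∑ c', ∑ d', G p (z,c',d') = ∑ r : β × β × β, G p r := by
    intro p
    rw [Fintype.sum_prod_type]
    exact Finset.sum_congr rfl fun z _ =>
      (Fintype.sum_prod_type (f := fun q : β × β => G p (z, q.1, q.2))).symm
  calc ∑ d, ∑ k, ∑ z, ∑ c', ∑ d', G (d,k) (z,c',d')
      = ∑ p : α × α, ∑ r : β × β × β, G p r := by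
        rw [Fintype.sum_prod_type]
        exact Finset.sum_congr rfl fun d _ => Finset.sum_congr rfl fun k _ => h1 (d,k)
    _ = ∑ r : β × β × β, ∑ p : α × α, G p r := Finset.sum_comm
    _ = ∑ z, ∑ c', ∑ d', ∑ d, ∑ k, G (d,k) (z,c',d') := by
        rw [Fintype.sum_prod_type]
        refine Finset.sum_congr rfl fun z _ => ?_
        rw [Fintype.sum_prod_type]
        refine Finset.sum_congr rfl fun c' _ => Finset.sum_congr rfl fun d' _ => ?_
        rw [Fintype.sum_prod_type]

end AuxiliaryLemmas

open Matrix
set_option maxHeartbeats 1600000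
set_option linter.unusedSectionVars false


/-- if `ψ` is a state with `L(ψ)` idempotent, then
`V(L(ψ)e ⊗ L(ψ)e) = L(ψ)e ⊗ L(ψ)e`. -/
theorem idempotent_state_slice_fixed {ι : Type*} [Fintype ι] [DecidableEq ι] [Nonempty ι]
    (V : Matrix (ι × ι) (ι × ι) ℂ) (hV : IsMU V)
    (e eHat : EuclideanSpace ℂ ι) (hm : Mult1 V e eHat)
    (ψ : Matrix ι ι ℂ →ₗ[ℂ] ℂ) (hψ : IsState ψ)
    (hid : LslF V ψ * LslF V ψ = LslF V ψ) :
    mact V (tens (appM (LslF V ψ) e) (appM (LslF V ψ) e)) =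
      tens (appM (LslF V ψ) e) (appM (LslF V ψ) e) := by
  classical
  obtain ⟨huv1, huv2, hpent⟩ := hV
  obtain ⟨-, -, hfix, -, -, -⟩ := hm
  set P : Matrix ι ι ℂ := LslF V ψ with hP
  set f : EuclideanSpace ℂ ι := appM P e with hfdef
  show appM V (tens f f) = tens f f
  set n : ℝ := ∑ a, Complex.normSq (f a) with hn
  have hN : ∑ a, (starRingEnd ℂ) (f a) * f a = ((n:ℝ) : ℂ) := by
    rw [hn]; push_cast
    exact Finset.sum_congr rfl fun a _ => (Complex.normSq_eq_conj_mul_self).symm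
  set Fa : ι → Matrix ι ι ℂ := fun a => fun x z => ∑ c, e c * V (x,a) (z,c) with hFa
  set Gb : ι → Matrix ι ι ℂ := fun b => fun z y => ∑ d, f d * V (z,b) (y,d) with hGb
  have hfa : ∀ a, ψ (Fa a) = f a := by
    intro a
    rw [hFa]
    rw [psi_fun_sum ψ (fun c => e c) (fun c => fun x z => V (x,a) (z,c))]
    rw [hfdef]
    show _ = ∑ c, P a c * e c
    refine Finset.sum_congr rfl fun c _ => ?_
    rw [hP]
    show e c * ψ (fun x y => V (x,a) (y,c)) = ψ (fun x y => V (x,a) (y,c)) * e c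
    ring
  have hPf : appM P f = f := by
    rw [hfdef, ← appM_mul, hid]
  have hgb : ∀ b, ψ (Gb b) = f b := by
    intro b
    rw [hGb]
    rw [psi_fun_sum ψ (fun d => f d) (fun d => fun z y => V (z,b) (y,d))]
    conv_rhs => rw [← hPf]
    show _ = ∑ d, P b d * f d
    refine Finset.sum_congr rfl fun d _ => ?_
    rw [hP]
    show f d * ψ (fun z y => V (z,b) (y,d)) = ψ (fun z y => V (z,b) (y,d)) * f d
    ring
  have key : ∀ a b : ι, appM V (tens f f) (a,b) = ψ (Fa a * Gb b) := by
    intro a b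
    have lhs1 : appM V (tens f f) (a,b) = ∑ c, ∑ d, (V (a,b) (c,d) * f d) * f c := by
      show ∑ q : ι × ι, V (a,b) q * (f q.1 * f q.2) = _
      rw [Fintype.sum_prod_type]
      exact Finset.sum_congr rfl fun c _ => Finset.sum_congr rfl fun d _ => by ring
    have lhs2 : appM V (tens f f) (a,b)
        = ψ (fun x y => ∑ p : ι × ι, (V (a,b) p * f p.2) * Fa p.1 x y) := by
      rw [lhs1, psi_fun_sum ψ (fun p : ι × ι => V (a,b) p * f p.2) (fun p => Fa p.1),
        Fintype.sum_prod_type]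
      exact Finset.sum_congr rfl fun c _ => Finset.sum_congr rfl fun d _ => by rw [hfa c]
    rw [lhs2]
    congr 1
    funext x y
    calc ∑ p : ι × ι, (V (a,b) p * f p.2) * Fa p.1 x y
        = ∑ d, ∑ k, ∑ c, (V (a,b) (c,d) * V (x,c) (y,k)) * (e k * f d) := by
          rw [Fintype.sum_prod_type]
          calc ∑ c, ∑ d, (V (a,b) (c,d) * f d) * Fa c x y
              = ∑ c, ∑ d, ∑ k, (V (a,b) (c,d) * V (x,c) (y,k)) * (e k * f d) := by
                refine Finset.sum_congr rfl fun c _ => Finset.sum_congr rfl fun d _ => ?_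
                rw [hFa]
                show (V (a,b) (c,d) * f d) * (∑ k, e k * V (x,c) (y,k)) = _
                rw [Finset.mul_sum]
                exact Finset.sum_congr rfl fun k _ => by ring
            _ = ∑ d, ∑ k, ∑ c, (V (a,b) (c,d) * V (x,c) (y,k)) * (e k * f d) := sum_rot3 _
      _ = ∑ d, ∑ k, (∑ c, V (a,b) (c,d) * V (x,c) (y,k)) * (e k * f d) :=
          Finset.sum_congr rfl fun d _ => Finset.sum_congr rfl fun k _ =>
            (Finset.sum_mul _ _ _).symm
      _ = ∑ d, ∑ k, (∑ z, ∑ c', ∑ d', V (x,a) (z,c') * V (z,b) (y,d') * V (c',d') (k,d))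
            * (e k * f d) :=
          Finset.sum_congr rfl fun d _ => Finset.sum_congr rfl fun k _ => by
            rw [pentagon_coord hpent x a b y k d]
      _ = ∑ d, ∑ k, ∑ z, ∑ c', ∑ d', (V (x,a) (z,c') * V (z,b) (y,d'))
            * (V (c',d') (k,d) * (e k * f d)) := by
          refine Finset.sum_congr rfl fun d _ => Finset.sum_congr rfl fun k _ => ?_
          rw [Finset.sum_mul]
          refine Finset.sum_congr rfl fun z _ => ?_
          rw [Finset.sum_mul]
          refine Finset.sum_congr rfl fun c' _ => ?_
          rw [Finset.sum_mul]
          exact Finset.sum_congr rfl fun d' _ => by ring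
      _ = ∑ z, ∑ c', ∑ d', ∑ d, ∑ k, (V (x,a) (z,c') * V (z,b) (y,d'))
            * (V (c',d') (k,d) * (e k * f d)) :=
          swap5 (fun p r => (V (x,a) (r.1, r.2.1) * V (r.1,b) (y, r.2.2))
            * (V (r.2.1, r.2.2) (p.2, p.1) * (e p.2 * f p.1)))
      _ = ∑ z, ∑ c', ∑ d', (V (x,a) (z,c') * V (z,b) (y,d')) * (e c' * f d') := by
          refine Finset.sum_congr rfl fun z _ => Finset.sum_congr rfl fun c' _ =>
            Finset.sum_congr rfl fun d' _ => ?_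
          have hh : ∑ d, ∑ k, (V (x,a) (z,c') * V (z,b) (y,d')) * (V (c',d') (k,d) * (e k * f d))
              = (V (x,a) (z,c') * V (z,b) (y,d')) * ∑ k, ∑ d, V (c',d') (k,d) * (e k * f d) := by
            rw [Finset.mul_sum]
            rw [Finset.sum_comm]
            refine Finset.sum_congr rfl fun d _ => ?_
            rw [Finset.mul_sum]
          rw [hh, fixed_coord hfix f c' d']
      _ = (Fa a * Gb b) x y := by
          rw [Matrix.mul_apply]
          refine Finset.sum_congr rfl fun z _ => ?_
          rw [hFa, hGb]
          show ∑ c', ∑ d', (V (x,a) (z,c') * V (z,b) (y,d')) * (e c' * f d')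
              = (∑ c', e c' * V (x,a) (z,c')) * (∑ d', f d' * V (z,b) (y,d'))
          rw [Finset.sum_mul_sum]
          exact Finset.sum_congr rfl fun c' _ => Finset.sum_congr rfl fun d' _ => by ring
  set FF : Matrix ι ι ℂ := ∑ a, (starRingEnd ℂ) (f a) • Fa a with hFF
  set GG : Matrix ι ι ℂ := ∑ b, (starRingEnd ℂ) (f b) • Gb b with hGG
  have hpsiFF : ψ FF = (n : ℂ) := by
    rw [hFF, map_sum, ← hN]
    refine Finset.sum_congr rfl fun a _ => ?_
    rw [LinearMap.map_smul, smul_eq_mul, hfa a]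
  have hpsiGG : ψ GG = (n : ℂ) := by
    rw [hGG, map_sum, ← hN]
    refine Finset.sum_congr rfl fun b _ => ?_
    rw [LinearMap.map_smul, smul_eq_mul, hgb b]
  have hX : ∑ p : ι × ι, (starRingEnd ℂ) (tens f f p) * appM V (tens f f) p
      = ψ (FF * GG) := by
    have hFG : FF * GG
        = ∑ a, ∑ b, ((starRingEnd ℂ) (f a) * (starRingEnd ℂ) (f b)) • (Fa a * Gb b) := by
      rw [hFF, hGG, Finset.sum_mul_sum]
      refine Finset.sum_congr rfl fun a _ => Finset.sum_congr rfl fun b _ => ?_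
      rw [Matrix.smul_mul, Matrix.mul_smul, smul_smul]
    rw [hFG, map_sum]
    rw [Fintype.sum_prod_type]
    refine Finset.sum_congr rfl fun a _ => ?_
    rw [map_sum]
    refine Finset.sum_congr rfl fun b _ => ?_
    rw [LinearMap.map_smul, smul_eq_mul, key a b]
    show (starRingEnd ℂ) (f a * f b) * ψ (Fa a * Gb b) = _
    rw [_root_.map_mul]
  obtain ⟨B, hB⟩ := state_rep hψ
  have hBnorm : ∑ i, ∑ k, Complex.normSq (B i k) = 1 := by
    have h1 := hB 1
    rw [hψ.1] at h1
    have h2 : (1 : ℂ) = ∑ i, ∑ j, (Complex.normSq (B i j) : ℂ) := by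
      rw [h1]
      refine Finset.sum_congr rfl fun i _ => Finset.sum_congr rfl fun j _ => ?_
      rw [Fintype.sum_eq_single j]
      · rw [Matrix.one_apply_eq, mul_one, Complex.mul_conj]
      · intro k hk
        rw [Matrix.one_apply_ne (Ne.symm hk), mul_zero, zero_mul]
    have h3 : ((1:ℝ) : ℂ) = ((∑ i, ∑ j, Complex.normSq (B i j) : ℝ) : ℂ) := by
      push_cast
      exact h2
    exact_mod_cast h3.symm
  have rep2 : ∀ A : Matrix ι ι ℂ, ψ (Aᴴ * A)
      = ∑ i, ∑ z, (Complex.normSq (∑ k, A z k * (starRingEnd ℂ) (B i k)) : ℂ) := by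
    intro A
    rw [hB]
    refine Finset.sum_congr rfl fun i _ => ?_
    calc ∑ j, ∑ k, B i j * (Aᴴ * A) j k * (starRingEnd ℂ) (B i k)
        = ∑ j, ∑ k, ∑ z, ((starRingEnd ℂ) (A z j) * B i j)
            * (A z k * (starRingEnd ℂ) (B i k)) := by
          refine Finset.sum_congr rfl fun j _ => Finset.sum_congr rfl fun k _ => ?_
          rw [Matrix.mul_apply, Finset.mul_sum, Finset.sum_mul]
          refine Finset.sum_congr rfl fun z _ => ?_
          rw [Matrix.conjTranspose_apply, RCLike.star_def]
          ring
      _ = ∑ z, ∑ j, ∑ k, ((starRingEnd ℂ) (A z j) * B i j)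
            * (A z k * (starRingEnd ℂ) (B i k)) := (sum_rot3 _).trans (sum_rot3 _)
      _ = ∑ z, (Complex.normSq (∑ k, A z k * (starRingEnd ℂ) (B i k)) : ℂ) := by
          refine Finset.sum_congr rfl fun z _ => ?_
          rw [← Finset.sum_mul_sum]
          have hc : ∑ j, (starRingEnd ℂ) (A z j) * B i j
              = (starRingEnd ℂ) (∑ k, A z k * (starRingEnd ℂ) (B i k)) := by
            rw [map_sum]
            exact Finset.sum_congr rfl fun j _ => by
              rw [_root_.map_mul, Complex.conj_conj]
          rw [hc, mul_comm, Complex.mul_conj]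
  set u : ι → ι → ℂ := fun i z => ∑ k, GG z k * (starRingEnd ℂ) (B i k) with hu
  have hGHG : ψ (GGᴴ * GG) = ((n * n : ℝ) : ℂ) := by
    set S : ℝ := ∑ i, ∑ z, Complex.normSq (u i z) with hS
    have hrep : ψ (GGᴴ * GG) = (S : ℂ) := by
      rw [rep2 GG, hS]
      push_cast
      rfl
    have hlow : n * n ≤ S := by
      have hgg_sum : ψ GG
          = ∑ p : ι × ι, (starRingEnd ℂ) ((starRingEnd ℂ) (B p.1 p.2)) * u p.1 p.2 := by
        calc ψ GG = ∑ i, ∑ j, B i j * u i j := by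
              rw [hB GG]
              refine Finset.sum_congr rfl fun i _ => Finset.sum_congr rfl fun j _ => ?_
              rw [hu, Finset.mul_sum]
              exact Finset.sum_congr rfl fun k _ => by ring
          _ = ∑ p : ι × ι, B p.1 p.2 * u p.1 p.2 :=
              (Fintype.sum_prod_type (f := fun p : ι × ι => B p.1 p.2 * u p.1 p.2)).symm
          _ = _ := Finset.sum_congr rfl fun p _ => by rw [Complex.conj_conj]
      have hcs := cs_normSq (fun p : ι × ι => (starRingEnd ℂ) (B p.1 p.2))
        (fun p : ι × ι => u p.1 p.2)
      rw [← hgg_sum, hpsiGG] at hcs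
      have e1 : ∑ p : ι × ι, Complex.normSq ((starRingEnd ℂ) (B p.1 p.2)) = 1 := by
        rw [Fintype.sum_prod_type]
        simp only [Complex.normSq_conj]
        exact hBnorm
      have e2 : ∑ p : ι × ι, Complex.normSq (u p.1 p.2) = S := by
        rw [hS, Fintype.sum_prod_type]
      rw [e1, e2, one_mul, Complex.normSq_ofReal] at hcs
      exact hcs
    have hup : S ≤ n * n := by
      have hGGapp : ∀ z k, GG z k = ∑ b, (starRingEnd ℂ) (f b) * Gb b z k := by
        intro z k
        rw [hGG]
        simp [Matrix.sum_apply]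
      have hstepa : ∀ i z, u i z = ∑ b, (starRingEnd ℂ) (f b)
          * appM V (tens (WithLp.toLp 2 fun k => (starRingEnd ℂ) (B i k)) f) (z, b) := by
        intro i z
        have hw : ∀ b : ι, appM V (tens (WithLp.toLp 2 fun k => (starRingEnd ℂ) (B i k)) f) (z, b)
            = ∑ k, Gb b z k * (starRingEnd ℂ) (B i k) := by
          intro b
          show ∑ q : ι × ι, V (z,b) q * ((starRingEnd ℂ) (B i q.1) * f q.2) = _
          rw [Fintype.sum_prod_type]
          refine Finset.sum_congr rfl fun k _ => ?_
          rw [hGb]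
          show ∑ d, V (z,b) (k,d) * ((starRingEnd ℂ) (B i k) * f d)
              = (∑ d, f d * V (z,b) (k,d)) * (starRingEnd ℂ) (B i k)
          rw [Finset.sum_mul]
          exact Finset.sum_congr rfl fun d _ => by ring
        calc u i z = ∑ k, (∑ b, (starRingEnd ℂ) (f b) * Gb b z k) * (starRingEnd ℂ) (B i k) := by
              rw [hu]
              exact Finset.sum_congr rfl fun k _ => by rw [hGGapp z k]
          _ = ∑ k, ∑ b, ((starRingEnd ℂ) (f b) * Gb b z k) * (starRingEnd ℂ) (B i k) :=
              Finset.sum_congr rfl fun k _ => Finset.sum_mul _ _ _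
          _ = ∑ b, ∑ k, ((starRingEnd ℂ) (f b) * Gb b z k) * (starRingEnd ℂ) (B i k) :=
              Finset.sum_comm
          _ = ∑ b, (starRingEnd ℂ) (f b)
              * appM V (tens (WithLp.toLp 2 fun k => (starRingEnd ℂ) (B i k)) f) (z, b) := by
              refine Finset.sum_congr rfl fun b _ => ?_
              rw [hw b, Finset.mul_sum]
              exact Finset.sum_congr rfl fun k _ => by ring
      have hstepd : ∀ i, ∑ p : ι × ι,
          Complex.normSq (appM V (tens (WithLp.toLp 2 fun k => (starRingEnd ℂ) (B i k)) f) p)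
          = (∑ k, Complex.normSq (B i k)) * n := by
        intro i
        have huc := unit_coord huv2 (tens (WithLp.toLp 2 fun k => (starRingEnd ℂ) (B i k)) f)
          (tens (WithLp.toLp 2 fun k => (starRingEnd ℂ) (B i k)) f)
        have hl : ∑ p : ι × ι, (starRingEnd ℂ)
            (appM V (tens (WithLp.toLp 2 fun k => (starRingEnd ℂ) (B i k)) f) p)
            * appM V (tens (WithLp.toLp 2 fun k => (starRingEnd ℂ) (B i k)) f) p
            = ((∑ p : ι × ι,
                Complex.normSq (appM V (tens (WithLp.toLp 2 fun k => (starRingEnd ℂ) (B i k)) f) p) : ℝ) : ℂ) := by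
          push_cast
          exact Finset.sum_congr rfl fun p _ => (Complex.normSq_eq_conj_mul_self).symm
        have hr : ∑ p : ι × ι, (starRingEnd ℂ)
            (tens (WithLp.toLp 2 fun k => (starRingEnd ℂ) (B i k)) f p)
            * tens (WithLp.toLp 2 fun k => (starRingEnd ℂ) (B i k)) f p
            = (((∑ k, Complex.normSq (B i k)) * n : ℝ) : ℂ) := by
          calc ∑ p : ι × ι, (starRingEnd ℂ) (tens (WithLp.toLp 2 fun k => (starRingEnd ℂ) (B i k)) f p)
                * tens (WithLp.toLp 2 fun k => (starRingEnd ℂ) (B i k)) f p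
              = ∑ k, ∑ d, ((starRingEnd ℂ) ((starRingEnd ℂ) (B i k)) * (starRingEnd ℂ) (B i k))
                  * ((starRingEnd ℂ) (f d) * f d) := by
                rw [Fintype.sum_prod_type]
                refine Finset.sum_congr rfl fun k _ => Finset.sum_congr rfl fun d _ => ?_
                show (starRingEnd ℂ) ((starRingEnd ℂ) (B i k) * f d)
                    * ((starRingEnd ℂ) (B i k) * f d) = _
                rw [_root_.map_mul]
                ring
            _ = (∑ k, (starRingEnd ℂ) ((starRingEnd ℂ) (B i k)) * (starRingEnd ℂ) (B i k))
                  * (∑ d, (starRingEnd ℂ) (f d) * f d) := (Finset.sum_mul_sum _ _ _ _).symm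
            _ = _ := by
                rw [hN]
                push_cast
                congr 1
                exact Finset.sum_congr rfl fun k _ => by
                  rw [Complex.conj_conj, Complex.mul_conj]
        rw [hl, hr] at huc
        exact_mod_cast huc
      have hn0 : 0 ≤ n := Finset.sum_nonneg fun _ _ => Complex.normSq_nonneg _
      have hstepc : ∀ i, ∑ z, Complex.normSq (u i z) ≤ (∑ k, Complex.normSq (B i k)) * n * n := by
        intro i
        have hpz : ∀ z, Complex.normSq (u i z) ≤ n * ∑ b,
            Complex.normSq (appM V (tens (WithLp.toLp 2 fun k => (starRingEnd ℂ) (B i k)) f) (z, b)) := by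
          intro z
          have := cs_normSq (fun b => f b)
            (fun b => appM V (tens (WithLp.toLp 2 fun k => (starRingEnd ℂ) (B i k)) f) (z, b))
          rw [← hstepa i z] at this
          rw [← hn] at this
          exact this
        calc ∑ z, Complex.normSq (u i z)
            ≤ ∑ z, n * ∑ b, Complex.normSq
                (appM V (tens (WithLp.toLp 2 fun k => (starRingEnd ℂ) (B i k)) f) (z, b)) :=
              Finset.sum_le_sum fun z _ => hpz z
          _ = n * ∑ p : ι × ι, Complex.normSq
                (appM V (tens (WithLp.toLp 2 fun k => (starRingEnd ℂ) (B i k)) f) p) := by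
              rw [Fintype.sum_prod_type, Finset.mul_sum]
          _ = (∑ k, Complex.normSq (B i k)) * n * n := by
              rw [hstepd i]
              ring
      calc S ≤ ∑ i, (∑ k, Complex.normSq (B i k)) * n * n := by
            rw [hS]
            exact Finset.sum_le_sum fun i _ => hstepc i
        _ = n * n := by
            rw [← Finset.sum_mul, ← Finset.sum_mul, hBnorm, one_mul]
    have hSnn : S = n * n := le_antisymm hup hlow
    rw [hrep, hSnn]
  set CC : Matrix ι ι ℂ := GG - (n:ℂ) • 1 with hCC
  have hGHc : ψ GGᴴ = (n:ℂ) := by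
    rw [state_conj hψ, hpsiGG, Complex.conj_ofReal]
  have hCHC : ψ (CCᴴ * CC) = 0 := by
    have hexp : CCᴴ * CC = GGᴴ * GG - (n:ℂ) • GGᴴ - (n:ℂ) • GG
        + ((n:ℂ) * (n:ℂ)) • (1 : Matrix ι ι ℂ) := by
      rw [hCC, Matrix.conjTranspose_sub, Matrix.conjTranspose_smul, Matrix.conjTranspose_one]
      rw [Complex.star_def, Complex.conj_ofReal]
      rw [Matrix.sub_mul, Matrix.mul_sub, Matrix.mul_sub]
      rw [Matrix.smul_mul, Matrix.mul_smul, Matrix.mul_smul, Matrix.smul_mul]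
      rw [Matrix.one_mul, Matrix.mul_one, smul_smul, Matrix.one_mul]
      abel
    rw [hexp, map_add, map_sub, map_sub, LinearMap.map_smul, LinearMap.map_smul,
      LinearMap.map_smul, hψ.1, hGHG, hpsiGG, hGHc]
    simp only [smul_eq_mul, mul_one]
    push_cast
    ring
  have hu' : ∀ i z, ∑ k, CC z k * (starRingEnd ℂ) (B i k) = 0 := by
    have h0 := rep2 CC
    rw [hCHC] at h0
    have h0' : (0:ℝ) = ∑ i, ∑ z, Complex.normSq (∑ k, CC z k * (starRingEnd ℂ) (B i k)) := by
      have h1 : ((0:ℝ):ℂ)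
          = ((∑ i, ∑ z, Complex.normSq (∑ k, CC z k * (starRingEnd ℂ) (B i k)) : ℝ) : ℂ) := by
        push_cast
        exact h0
      exact_mod_cast h1
    intro i z
    have hnn : ∀ i ∈ (Finset.univ : Finset ι), (0:ℝ)
        ≤ ∑ z, Complex.normSq (∑ k, CC z k * (starRingEnd ℂ) (B i k)) :=
      fun i _ => Finset.sum_nonneg fun z _ => Complex.normSq_nonneg _
    have hi := (Finset.sum_eq_zero_iff_of_nonneg hnn).mp h0'.symm i (Finset.mem_univ i)
    have hz := (Finset.sum_eq_zero_iff_of_nonneg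
      (fun z _ => Complex.normSq_nonneg _)).mp hi z (Finset.mem_univ z)
    exact Complex.normSq_eq_zero.mp hz
  have hFC : ψ (FF * CC) = 0 := by
    rw [hB]
    refine Finset.sum_eq_zero fun i _ => Finset.sum_eq_zero fun j _ => ?_
    calc ∑ k, B i j * (FF * CC) j k * (starRingEnd ℂ) (B i k)
        = ∑ k, ∑ z, (B i j * FF j z) * (CC z k * (starRingEnd ℂ) (B i k)) := by
          refine Finset.sum_congr rfl fun k _ => ?_
          rw [Matrix.mul_apply, Finset.mul_sum, Finset.sum_mul]
          exact Finset.sum_congr rfl fun z _ => by ring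
      _ = ∑ z, ∑ k, (B i j * FF j z) * (CC z k * (starRingEnd ℂ) (B i k)) := Finset.sum_comm
      _ = ∑ z, (B i j * FF j z) * ∑ k, CC z k * (starRingEnd ℂ) (B i k) :=
          Finset.sum_congr rfl fun z _ => (Finset.mul_sum _ _ _).symm
      _ = 0 := Finset.sum_eq_zero fun z _ => by rw [hu' i z, mul_zero]
  have hFGval : ψ (FF * GG) = ((n * n : ℝ) : ℂ) := by
    have hGGdec : GG = CC + (n:ℂ) • 1 := by
      rw [hCC]
      abel
    have hdec : FF * GG = FF * CC + (n:ℂ) • FF := by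
      rw [hGGdec, Matrix.mul_add, Matrix.mul_smul, Matrix.mul_one]
    rw [hdec, map_add, hFC, LinearMap.map_smul, hpsiFF, smul_eq_mul, zero_add]
    push_cast
    ring
  have hvw : ∑ p : ι × ι, (starRingEnd ℂ) (tens f f p) * appM V (tens f f) p
      = ((n*n:ℝ):ℂ) := by rw [hX, hFGval]
  have hvv : ∑ p : ι × ι, (starRingEnd ℂ) (tens f f p) * tens f f p = ((n*n:ℝ):ℂ) := by
    calc ∑ p : ι × ι, (starRingEnd ℂ) (tens f f p) * tens f f p
        = ∑ a, ∑ b, ((starRingEnd ℂ) (f a) * f a) * ((starRingEnd ℂ) (f b) * f b) := by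
          rw [Fintype.sum_prod_type]
          refine Finset.sum_congr rfl fun a _ => Finset.sum_congr rfl fun b _ => ?_
          show (starRingEnd ℂ) (f a * f b) * (f a * f b) = _
          rw [_root_.map_mul]
          ring
      _ = (∑ a, (starRingEnd ℂ) (f a) * f a) * (∑ b, (starRingEnd ℂ) (f b) * f b) :=
          (Finset.sum_mul_sum _ _ _ _).symm
      _ = ((n*n:ℝ):ℂ) := by
          rw [hN]
          push_cast
          ring
  have hww : ∑ p : ι × ι, (starRingEnd ℂ) (appM V (tens f f) p) * appM V (tens f f) p
      = ((n*n:ℝ):ℂ) := (unit_coord huv2 (tens f f) (tens f f)).trans hvv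
  have hwv : ∑ p : ι × ι, (starRingEnd ℂ) (appM V (tens f f) p) * tens f f p
      = ((n*n:ℝ):ℂ) := by
    have hconj : ∑ p : ι × ι, (starRingEnd ℂ) (appM V (tens f f) p) * tens f f p
        = (starRingEnd ℂ) (∑ p : ι × ι, (starRingEnd ℂ) (tens f f p) * appM V (tens f f) p) := by
      rw [map_sum]
      refine Finset.sum_congr rfl fun p _ => ?_
      rw [_root_.map_mul, Complex.conj_conj]
      ring
    rw [hconj, hvw, Complex.conj_ofReal]
  have hzero : ∑ p : ι × ι, Complex.normSq (appM V (tens f f) p - tens f f p) = 0 := by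
    have hzc : ∑ p : ι × ι, (Complex.normSq (appM V (tens f f) p - tens f f p) : ℂ) = 0 := by
      have expand : ∀ p : ι × ι, (Complex.normSq (appM V (tens f f) p - tens f f p) : ℂ)
          = ((starRingEnd ℂ) (appM V (tens f f) p) * appM V (tens f f) p
              - (starRingEnd ℂ) (appM V (tens f f) p) * tens f f p)
            - ((starRingEnd ℂ) (tens f f p) * appM V (tens f f) p
              - (starRingEnd ℂ) (tens f f p) * tens f f p) := by
        intro p
        rw [← Complex.mul_conj]
        rw [map_sub]
        ring
      rw [Finset.sum_congr rfl fun p _ => expand p]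
      rw [Finset.sum_sub_distrib, Finset.sum_sub_distrib, Finset.sum_sub_distrib]
      rw [hww, hwv, hvw, hvv]
      ring
    have : ((∑ p : ι × ι, Complex.normSq (appM V (tens f f) p - tens f f p) : ℝ) : ℂ) = 0 := by
      push_cast
      exact hzc
    exact_mod_cast this
  ext p
  have hp := (Finset.sum_eq_zero_iff_of_nonneg
    (fun p _ => Complex.normSq_nonneg _)).mp hzero p (Finset.mem_univ p)
  have := Complex.normSq_eq_zero.mp hp
  exact sub_eq_zero.mp this

end MU
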